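/- Let w₀ = (n, n-1, ..., 1) be the longest element of S_n, let ρ = (i_1, ..., i_l) with l = binom(n,2) be any reduced decomposition of w₀, and let X = {123212, 321232, 212321, 232123} (a set of reduced words of the longest element of S_4). Then the number of quadruples a < b < c < d whose induced reduced word under ρ lies in X equals Σ_{j=1}^{l} (i_j - 1)(n - i_j - 1) - 2·binom(n,4). -/

import Mathlib

/-- The adjacent transposition `s_i` of `S_n` (1-based: swaps positions `i` and `i+1`). -/
def adjT (n : ℕ) (i : ℕ) : Equiv.Perm (Fin n) :=
  if h : 1 ≤ i ∧ i < n then Equiv.swap ⟨i - 1, by omega⟩ ⟨i, h.2⟩ else 1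

/-- The number of inversions of a permutation of `Fin n`. -/
def invCount (n : ℕ) (w : Equiv.Perm (Fin n)) : ℕ :=
  (Finset.univ.filter fun p : Fin n × Fin n => p.1 < p.2 ∧ w p.2 < w p.1).card

/-- `ρ` is a reduced decomposition of `w`: a word of length `inv(w)` in the letters
`1, …, n-1` whose product of adjacent transpositions is `w`. -/
def IsReducedDecomp (n : ℕ) (w : Equiv.Perm (Fin n)) (ρ : List ℕ) : Prop :=
  (∀ r ∈ ρ, 1 ≤ r ∧ r < n) ∧ (ρ.map (adjT n)).prod = w ∧ ρ.length = invCount n w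

/-- A short braid move: swapping two adjacent letters differing by at least 2. -/
def ShortBraidMove (ρ ρ' : List ℕ) : Prop :=
  ∃ l r : List ℕ, ∃ a b : ℕ, (a + 2 ≤ b ∨ b + 2 ≤ a) ∧
    ρ = l ++ [a, b] ++ r ∧ ρ' = l ++ [b, a] ++ r

/-- Two words are in the same commutation class iff related by short braid moves. -/
def CommEquiv : List ℕ → List ℕ → Prop := Relation.ReflTransGen ShortBraidMove

/-- A long braid move: `(i+1, i, i+1) ↔ (i, i+1, i)` on a consecutive substring. -/
def LongBraidMove (ρ ρ' : List ℕ) : Prop :=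
  ∃ l r : List ℕ, ∃ i : ℕ,
    (ρ = l ++ [i + 1, i, i + 1] ++ r ∧ ρ' = l ++ [i, i + 1, i] ++ r) ∨
    (ρ = l ++ [i, i + 1, i] ++ r ∧ ρ' = l ++ [i + 1, i, i + 1] ++ r)

/-- The number of commutation classes of reduced decompositions of `w`. -/
noncomputable def numCommClasses (n : ℕ) (w : Equiv.Perm (Fin n)) : ℕ :=
  Nat.card (Quot fun a b : {ρ : List ℕ // IsReducedDecomp n w ρ} => CommEquiv a.1 b.1)

/-- The arrangement (position ↦ value) after the first `k` steps of the word `ρ`. -/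
def prefixPerm (n : ℕ) (ρ : List ℕ) (k : ℕ) : Equiv.Perm (Fin n) :=
  ((ρ.take k).map (adjT n)).prod

/-- The word induced by `ρ` on a set `A` of values: record, in order, each step of `ρ`
swapping two values of `A`, labeled (1-based) by the relative position of the swapped
pair among the values of `A`. -/
def inducedWord (n : ℕ) (ρ : List ℕ) (A : Finset (Fin n)) : List ℕ :=
  (List.range ρ.length).filterMap fun k =>
    let u := prefixPerm n ρ k
    let i := ρ.getD k 0
    if h : 1 ≤ i ∧ i < n then
      if u ⟨i - 1, by omega⟩ ∈ A ∧ u ⟨i, h.2⟩ ∈ A then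
        some ((A.filter fun x => (u.symm x : ℕ) < i - 1).card + 1)
      else none
    else none

/-- The number of `(2,1,2)`-subnetworks of `ρ`. -/
def count212 (n : ℕ) (ρ : List ℕ) : ℕ :=
  (Finset.univ.filter fun A : Finset (Fin n) =>
    A.card = 3 ∧ inducedWord n ρ A = [2, 1, 2]).card

/-- The number of 321-patterns of `w`. -/
def N321 (n : ℕ) (w : Equiv.Perm (Fin n)) : ℕ :=
  (Finset.univ.filter fun t : Fin n × Fin n × Fin n =>
    t.1 < t.2.1 ∧ t.2.1 < t.2.2 ∧ w t.2.2 < w t.2.1 ∧ w t.2.1 < w t.1).card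

/-! ### Auxiliary development -/

namespace CXS

open Finset

/-- The step function recorded by `inducedWord`. -/
def FA (n : ℕ) (ρ : List ℕ) (A : Finset (Fin n)) (k : ℕ) : Option ℕ :=
  let u := prefixPerm n ρ k
  let i := ρ.getD k 0
  if h : 1 ≤ i ∧ i < n then
    if u ⟨i - 1, by omega⟩ ∈ A ∧ u ⟨i, h.2⟩ ∈ A then
      some ((A.filter fun x => (u.symm x : ℕ) < i - 1).card + 1)
    else none
  else none

lemma inducedWord_eq (n : ℕ) (ρ : List ℕ) (A : Finset (Fin n)) :
    inducedWord n ρ A = (List.range ρ.length).filterMap (FA n ρ A) := rfl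

/-- Step `k` of `ρ` crosses the values `x` and `y`. -/
def Crosses (n : ℕ) (ρ : List ℕ) (k : ℕ) (x y : Fin n) : Prop :=
  let i := ρ.getD k 0
  (1 ≤ i ∧ i < n) ∧
    ((((prefixPerm n ρ k).symm x : ℕ) = i - 1 ∧ ((prefixPerm n ρ k).symm y : ℕ) = i) ∨
     (((prefixPerm n ρ k).symm x : ℕ) = i ∧ ((prefixPerm n ρ k).symm y : ℕ) = i - 1))

instance (n : ℕ) (ρ : List ℕ) (k : ℕ) (x y : Fin n) : Decidable (Crosses n ρ k x y) := by
  unfold Crosses; infer_instance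

variable {n : ℕ} {ρ : List ℕ}

lemma adjT_valid {i : ℕ} (h1 : 1 ≤ i) (h2 : i < n) :
    adjT n i = Equiv.swap ⟨i - 1, by omega⟩ ⟨i, h2⟩ := dif_pos ⟨h1, h2⟩

lemma adjT_symm (i : ℕ) : (adjT n i).symm = adjT n i := by
  unfold adjT; split_ifs <;> simp [Equiv.Perm.one_symm]

lemma prefixPerm_zero : prefixPerm n ρ 0 = 1 := by simp [prefixPerm]

lemma prefixPerm_succ {k : ℕ} (hk : k < ρ.length) :
    prefixPerm n ρ (k + 1) = prefixPerm n ρ k * adjT n (ρ.getD k 0) := by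
  unfold prefixPerm
  rw [List.take_succ, List.map_append, List.prod_append,
    List.getElem?_eq_getElem hk, List.getD_eq_getElem ρ 0 hk]
  simp

lemma pos_succ {k : ℕ} (hk : k < ρ.length) (a : Fin n) :
    (prefixPerm n ρ (k + 1)).symm a = adjT n (ρ.getD k 0) ((prefixPerm n ρ k).symm a) := by
  rw [prefixPerm_succ hk, Equiv.Perm.mul_def, Equiv.symm_trans_apply, adjT_symm]

lemma swap_adj_lt {i : ℕ} (h1 : 1 ≤ i) (h2 : i < n) (p q : Fin n)
    (hne : ¬((p : ℕ) = i - 1 ∧ (q : ℕ) = i) ∧ ¬((p : ℕ) = i ∧ (q : ℕ) = i - 1)) :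
    (Equiv.swap (⟨i - 1, by omega⟩ : Fin n) ⟨i, h2⟩ p <
      Equiv.swap (⟨i - 1, by omega⟩ : Fin n) ⟨i, h2⟩ q ↔ p < q) := by
  simp only [Equiv.swap_apply_def, Fin.ext_iff]
  split_ifs <;> simp only [Fin.lt_def] at * <;> omega

lemma letter_valid (hρ : ∀ r ∈ ρ, 1 ≤ r ∧ r < n) {k : ℕ} (hk : k < ρ.length) :
    1 ≤ ρ.getD k 0 ∧ ρ.getD k 0 < n := by
  apply hρ
  rw [List.getD_eq_getElem ρ 0 hk]
  exact List.getElem_mem hk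

lemma crosses_symm {k : ℕ} {x y : Fin n} : Crosses n ρ k x y ↔ Crosses n ρ k y x := by
  unfold Crosses; tauto

lemma prefixPerm_length {w : Equiv.Perm (Fin n)} (h2 : (ρ.map (adjT n)).prod = w) :
    prefixPerm n ρ ρ.length = w := by
  unfold prefixPerm; rw [List.take_length]; exact h2

lemma pos_succ_lt_iff (hρ : ∀ r ∈ ρ, 1 ≤ r ∧ r < n) {k : ℕ} (hk : k < ρ.length)
    {x y : Fin n} :
    ((prefixPerm n ρ (k + 1)).symm x < (prefixPerm n ρ (k + 1)).symm y) ↔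
      (if Crosses n ρ k x y then
        ¬((prefixPerm n ρ k).symm x < (prefixPerm n ρ k).symm y)
       else ((prefixPerm n ρ k).symm x < (prefixPerm n ρ k).symm y)) := by
  obtain ⟨hv1, hv2⟩ := letter_valid hρ hk
  set i := ρ.getD k 0 with hidef
  rw [pos_succ hk, pos_succ hk, ← hidef, adjT_valid hv1 hv2]
  by_cases hc : Crosses n ρ k x y
  · rw [if_pos hc]
    obtain ⟨-, hc⟩ := hc
    rcases hc with ⟨hx, hy⟩ | ⟨hx, hy⟩
    · have ex : (prefixPerm n ρ k).symm x = (⟨i - 1, by omega⟩ : Fin n) := Fin.ext hx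
      have ey : (prefixPerm n ρ k).symm y = (⟨i, hv2⟩ : Fin n) := Fin.ext hy
      simp only [ex, ey, Equiv.swap_apply_left, Equiv.swap_apply_right, Fin.lt_def]
      omega
    · have ex : (prefixPerm n ρ k).symm x = (⟨i, hv2⟩ : Fin n) := Fin.ext hx
      have ey : (prefixPerm n ρ k).symm y = (⟨i - 1, by omega⟩ : Fin n) := Fin.ext hy
      simp only [ex, ey, Equiv.swap_apply_left, Equiv.swap_apply_right, Fin.lt_def]
      omega
  · rw [if_neg hc]
    apply swap_adj_lt hv1 hv2
    unfold Crosses at hc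
    exact ⟨fun hh => hc ⟨⟨hv1, hv2⟩, Or.inl hh⟩, fun hh => hc ⟨⟨hv1, hv2⟩, Or.inr hh⟩⟩

lemma parity_even (hρ : ∀ r ∈ ρ, 1 ≤ r ∧ r < n) {x y : Fin n} :
    ∀ m, m ≤ ρ.length →
      (Even (((Finset.range m).filter fun k => Crosses n ρ k x y).card) ↔
        (((prefixPerm n ρ m).symm x < (prefixPerm n ρ m).symm y) ↔ x < y))
  | 0, _ => by simp [prefixPerm_zero, Equiv.Perm.one_symm]
  | (m + 1), hm => by
    have IH := parity_even hρ (x := x) (y := y) m (by omega)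
    rw [Finset.range_add_one, Finset.filter_insert]
    have hstep := pos_succ_lt_iff hρ (x := x) (y := y) (show m < ρ.length by omega)
    by_cases hc : Crosses n ρ m x y
    · rw [if_pos hc, Finset.card_insert_of_notMem (by simp), Nat.even_add_one]
      rw [if_pos hc] at hstep
      tauto
    · rw [if_neg hc]
      rw [if_neg hc] at hstep
      tauto

lemma cross_odd (h : IsReducedDecomp n (Fin.revPerm : Equiv.Perm (Fin n)) ρ)
    {x y : Fin n} (hxy : x < y) :
    ¬ Even (((Finset.range ρ.length).filter fun k => Crosses n ρ k x y).card) := by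
  rw [parity_even h.1 ρ.length le_rfl, prefixPerm_length h.2.1]
  simp only [Fin.revPerm_symm, Fin.revPerm_apply, Fin.rev_lt_rev]
  intro hh
  have := hh.2 hxy
  exact absurd hxy (not_lt.2 this.le)

lemma invCount_rev :
    invCount n (Fin.revPerm : Equiv.Perm (Fin n)) =
      ((Finset.univ : Finset (Fin n × Fin n)).filter fun p => p.1 < p.2).card := by
  unfold invCount
  congr 1
  apply Finset.filter_congr
  intro p _
  simp [Fin.rev_lt_rev, and_iff_left_iff_imp]

lemma card_cross_pairs (hρ : ∀ r ∈ ρ, 1 ≤ r ∧ r < n) {k : ℕ} (hk : k < ρ.length) :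
    ((((Finset.univ : Finset (Fin n × Fin n)).filter fun p => p.1 < p.2)).filter
      fun p => Crosses n ρ k p.1 p.2).card = 1 := by
  obtain ⟨hv1, hv2⟩ := letter_valid hρ hk
  set i := ρ.getD k 0 with hi
  set u := prefixPerm n ρ k with hu
  set a := u ⟨i - 1, by omega⟩ with ha
  set b := u ⟨i, hv2⟩ with hb
  have hab : a ≠ b := by
    simp only [ha, hb]
    intro hh
    have := u.injective hh
    simp only [Fin.mk.injEq] at this
    omega
  have hpa : ((u.symm a : ℕ)) = i - 1 := by rw [ha]; simp
  have hpb : ((u.symm b : ℕ)) = i := by rw [hb]; simp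
  have key : ∀ p : Fin n × Fin n, Crosses n ρ k p.1 p.2 ↔ (p = (a, b) ∨ p = (b, a)) := by
    intro p
    unfold Crosses
    rw [← hi, ← hu]
    constructor
    · rintro ⟨-, ⟨h1, h2⟩ | ⟨h1, h2⟩⟩
      · left
        have e1 : u.symm p.1 = ⟨i - 1, by omega⟩ := Fin.ext h1
        have e2 : u.symm p.2 = ⟨i, hv2⟩ := Fin.ext h2
        have : p.1 = a := by rw [ha, ← e1]; simp
        have : p.2 = b := by rw [hb, ← e2]; simp
        ext <;> simp_all
      · right
        have e1 : u.symm p.1 = ⟨i, hv2⟩ := Fin.ext h1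
        have e2 : u.symm p.2 = ⟨i - 1, by omega⟩ := Fin.ext h2
        have : p.1 = b := by rw [hb, ← e1]; simp
        have : p.2 = a := by rw [ha, ← e2]; simp
        ext <;> simp_all
    · rintro (rfl | rfl)
      · exact ⟨⟨hv1, hv2⟩, Or.inl ⟨hpa, hpb⟩⟩
      · exact ⟨⟨hv1, hv2⟩, Or.inr ⟨hpb, hpa⟩⟩
  rw [Finset.card_eq_one]
  refine ⟨if a < b then (a, b) else (b, a), ?_⟩
  ext p
  simp only [Finset.mem_filter, Finset.mem_univ, true_and, Finset.mem_singleton, key p]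
  rcases lt_trichotomy a b with hl | he | hl
  · rw [if_pos hl]
    constructor
    · rintro ⟨hp, rfl | rfl⟩
      · rfl
      · exact absurd hp (by simp [not_lt, hl.le])
    · rintro rfl; exact ⟨hl, Or.inl rfl⟩
  · exact absurd he hab
  · rw [if_neg (not_lt.2 hl.le)]
    constructor
    · rintro ⟨hp, rfl | rfl⟩
      · exact absurd hp (by simp [not_lt, hl.le])
      · rfl
    · rintro rfl; exact ⟨hl, Or.inr rfl⟩

lemma all_eq_one {α : Type*} {s : Finset α} {f : α → ℕ} (h1 : ∀ a ∈ s, 1 ≤ f a)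
    (h2 : ∑ a ∈ s, f a = s.card) : ∀ a ∈ s, f a = 1 := by
  by_contra hcon
  push_neg at hcon
  obtain ⟨a, ha, hfa⟩ := hcon
  have hlt : ∑ _x ∈ s, 1 < ∑ x ∈ s, f x :=
    Finset.sum_lt_sum h1 ⟨a, ha, by have := h1 a ha; omega⟩
  rw [Finset.sum_const, smul_eq_mul, mul_one, h2] at hlt
  exact lt_irrefl _ hlt

lemma cross_once (h : IsReducedDecomp n (Fin.revPerm : Equiv.Perm (Fin n)) ρ)
    {x y : Fin n} (hxy : x < y) :
    ((Finset.range ρ.length).filter fun k => Crosses n ρ k x y).card = 1 := by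
  classical
  set P := ((Finset.univ : Finset (Fin n × Fin n)).filter fun p => p.1 < p.2) with hP
  have hsum : ∑ p ∈ P, ((Finset.range ρ.length).filter fun k => Crosses n ρ k p.1 p.2).card
      = P.card := by
    have : ∀ p ∈ P,
        ((Finset.range ρ.length).filter fun k => Crosses n ρ k p.1 p.2).card
          = ∑ k ∈ Finset.range ρ.length, if Crosses n ρ k p.1 p.2 then 1 else 0 := by
      intro p _; rw [Finset.card_filter]
    rw [Finset.sum_congr rfl this, Finset.sum_comm]
    have : ∀ k ∈ Finset.range ρ.length,
        (∑ p ∈ P, if Crosses n ρ k p.1 p.2 then 1 else 0) = 1 := by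
      intro k hk
      rw [← Finset.card_filter]
      exact card_cross_pairs h.1 (Finset.mem_range.1 hk)
    rw [Finset.sum_congr rfl this, Finset.sum_const, smul_eq_mul, mul_one,
      Finset.card_range, h.2.2, invCount_rev]
  have hmem : (x, y) ∈ P := by simp [hP, hxy]
  refine all_eq_one (fun p hp => ?_) hsum (x, y) hmem
  rcases Nat.eq_zero_or_pos
      (((Finset.range ρ.length).filter fun k => Crosses n ρ k p.1 p.2).card) with h0 | h1
  · exfalso
    apply cross_odd h (show p.1 < p.2 by simpa [hP] using hp)
    rw [h0]; exact Even.zero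
  · exact h1

/-- Rank of `a` inside `A` by current position after `k` steps. -/
def rkA (n : ℕ) (ρ : List ℕ) (A : Finset (Fin n)) (k : ℕ) (a : Fin n) : ℕ :=
  (A.filter fun x => (prefixPerm n ρ k).symm x < (prefixPerm n ρ k).symm a).card

lemma rk_lt_card {A : Finset (Fin n)} {k : ℕ} {a : Fin n} (ha : a ∈ A) :
    rkA n ρ A k a < A.card := by
  apply Finset.card_lt_card
  rw [Finset.ssubset_iff_of_subset (Finset.filter_subset _ _)]
  exact ⟨a, ha, by simp⟩

lemma rk_strict {A : Finset (Fin n)} {k : ℕ} {a b : Fin n} (ha : a ∈ A) (_hb : b ∈ A)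
    (hlt : (prefixPerm n ρ k).symm a < (prefixPerm n ρ k).symm b) :
    rkA n ρ A k a < rkA n ρ A k b := by
  apply Finset.card_lt_card
  rw [Finset.ssubset_iff_of_subset]
  · exact ⟨a, Finset.mem_filter.2 ⟨ha, hlt⟩, by simp⟩
  · intro x hx
    rw [Finset.mem_filter] at hx ⊢
    exact ⟨hx.1, hx.2.trans hlt⟩

lemma rk_inj {A : Finset (Fin n)} {k : ℕ} {a b : Fin n} (ha : a ∈ A) (hb : b ∈ A)
    (hrk : rkA n ρ A k a = rkA n ρ A k b) : a = b := by
  rcases lt_trichotomy ((prefixPerm n ρ k).symm a) ((prefixPerm n ρ k).symm b) with hl | he | hl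
  · exact absurd hrk (Nat.ne_of_lt (rk_strict ha hb hl))
  · exact (prefixPerm n ρ k).symm.injective he
  · exact absurd hrk.symm (Nat.ne_of_lt (rk_strict hb ha hl))

lemma rk_zero {A : Finset (Fin n)} (hA : A.card = 4) (j : Fin 4) :
    rkA n ρ A 0 ((A.orderIsoOfFin hA j : Fin n)) = j := by
  classical
  unfold rkA
  rw [prefixPerm_zero]
  have hset : (A.filter fun x => (1 : Equiv.Perm (Fin n)).symm x <
      (1 : Equiv.Perm (Fin n)).symm (A.orderIsoOfFin hA j : Fin n)) =
      (Finset.Iio j).image (fun t => ((A.orderIsoOfFin hA t : Fin n))) := by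
    ext x
    rw [Finset.mem_filter]
    simp only [Finset.mem_filter, Finset.mem_image, Finset.mem_Iio, Equiv.Perm.one_symm,
      Equiv.Perm.coe_one, id_eq]
    constructor
    · rintro ⟨hxA, hlt⟩
      obtain ⟨t, ht⟩ := (A.orderIsoOfFin hA).surjective ⟨x, hxA⟩
      refine ⟨t, ?_, by rw [ht]⟩
      rw [← OrderIso.lt_iff_lt (A.orderIsoOfFin hA), ht]
      exact Subtype.coe_lt_coe.1 (by simpa using hlt)
    · rintro ⟨t, htj, rfl⟩
      refine ⟨(A.orderIsoOfFin hA t).2, ?_⟩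
      simpa using Subtype.coe_lt_coe.2 ((A.orderIsoOfFin hA).lt_iff_lt.2 htj)
  rw [hset, Finset.card_image_of_injective _
    (fun s t hst => (A.orderIsoOfFin hA).injective (Subtype.ext hst)), Fin.card_Iio]

lemma rk_last {A : Finset (Fin n)} (hA : A.card = 4)
    (hlast : prefixPerm n ρ ρ.length = (Fin.revPerm : Equiv.Perm (Fin n))) (j : Fin 4) :
    rkA n ρ A ρ.length ((A.orderIsoOfFin hA j : Fin n)) = 3 - (j : ℕ) := by
  classical
  set a := (A.orderIsoOfFin hA j : Fin n) with hadef
  have haA : a ∈ A := (A.orderIsoOfFin hA j).2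
  unfold rkA
  rw [hlast]
  have hgt : (A.filter fun x => Fin.revPerm.symm x < Fin.revPerm.symm a) =
      (A.filter fun x => a < x) := by
    apply Finset.filter_congr
    intro x _
    simp [Fin.rev_lt_rev]
  rw [hgt]
  have hlt : (A.filter fun x => x < a).card = (j : ℕ) := by
    have := rk_zero (ρ := ρ) hA j
    unfold rkA at this
    rw [prefixPerm_zero] at this
    rw [← this]
    congr 1
  have hsplit := Finset.card_filter_add_card_filter_not (s := A)
    (p := fun x => x < a)
  have hneg : (A.filter fun x => ¬ x < a) = insert a (A.filter fun x => a < x) := by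
    ext x
    simp only [Finset.mem_filter, Finset.mem_insert, not_lt]
    constructor
    · rintro ⟨hxA, hle⟩
      rcases eq_or_lt_of_le hle with hh | hh
      · exact Or.inl hh.symm
      · exact Or.inr ⟨hxA, hh⟩
    · rintro (rfl | ⟨hxA, hh⟩)
      · exact ⟨haA, le_refl _⟩
      · exact ⟨hxA, hh.le⟩
  rw [hneg, Finset.card_insert_of_notMem (by simp), hA, hlt] at hsplit
  have hj : (j : ℕ) < 4 := j.isLt
  omega

lemma FA_some {A : Finset (Fin n)} {k : ℕ} (hv1 : 1 ≤ ρ.getD k 0) (hv2 : ρ.getD k 0 < n)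
    (hx : prefixPerm n ρ k ⟨ρ.getD k 0 - 1, by omega⟩ ∈ A)
    (hy : prefixPerm n ρ k ⟨ρ.getD k 0, hv2⟩ ∈ A) :
    FA n ρ A k = some ((A.filter fun x =>
      (((prefixPerm n ρ k).symm x : ℕ)) < ρ.getD k 0 - 1).card + 1) := by
  unfold FA
  rw [dif_pos ⟨hv1, hv2⟩, if_pos ⟨hx, hy⟩]

lemma FA_none_case {A : Finset (Fin n)} {k : ℕ} (hv1 : 1 ≤ ρ.getD k 0)
    (hv2 : ρ.getD k 0 < n)
    (hno : ¬(prefixPerm n ρ k ⟨ρ.getD k 0 - 1, by omega⟩ ∈ A ∧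
        prefixPerm n ρ k ⟨ρ.getD k 0, hv2⟩ ∈ A)) :
    FA n ρ A k = none := by
  unfold FA
  rw [dif_pos ⟨hv1, hv2⟩, if_neg hno]

section RankUpdate

lemma swap_val {i : ℕ} (h1 : 1 ≤ i) (h2 : i < n) (p : Fin n) :
    ((Equiv.swap (⟨i - 1, by omega⟩ : Fin n) ⟨i, h2⟩ p : Fin n) : ℕ)
      = if (p : ℕ) = i - 1 then i else if (p : ℕ) = i then i - 1 else (p : ℕ) := by
  simp only [Equiv.swap_apply_def, Fin.ext_iff]
  split_ifs <;> simp_all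

variable {A : Finset (Fin n)} {k : ℕ} {x y : Fin n}

lemma rk_y_eq (hv1 : 1 ≤ ρ.getD k 0) (hv2 : ρ.getD k 0 < n) (hxA : x ∈ A) (_hyA : y ∈ A)
    (hpx : ((prefixPerm n ρ k).symm x : ℕ) = ρ.getD k 0 - 1)
    (hpy : ((prefixPerm n ρ k).symm y : ℕ) = ρ.getD k 0) :
    rkA n ρ A k y = rkA n ρ A k x + 1 := by
  unfold rkA
  have hset : (A.filter fun b => (prefixPerm n ρ k).symm b < (prefixPerm n ρ k).symm y)
      = insert x (A.filter fun b => (prefixPerm n ρ k).symm b < (prefixPerm n ρ k).symm x) := by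
    ext b
    simp only [Finset.mem_filter, Finset.mem_insert, Fin.lt_def, hpx, hpy]
    constructor
    · rintro ⟨hbA, hlt⟩
      by_cases hb : ((prefixPerm n ρ k).symm b : ℕ) = ρ.getD k 0 - 1
      · left
        apply (prefixPerm n ρ k).symm.injective
        exact Fin.ext (by omega)
      · right; exact ⟨hbA, by omega⟩
    · rintro (rfl | ⟨hbA, hlt⟩)
      · exact ⟨hxA, by omega⟩
      · exact ⟨hbA, by omega⟩
  rw [hset, Finset.card_insert_of_notMem (by simp)]

lemma val_ne_of_ne {a b : Fin n} {k : ℕ} (hab : a ≠ b) :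
    ((prefixPerm n ρ k).symm a : ℕ) ≠ ((prefixPerm n ρ k).symm b : ℕ) := by
  intro hh
  exact hab ((prefixPerm n ρ k).symm.injective (Fin.ext hh))

lemma rk_succ_x (hk : k < ρ.length) (hv1 : 1 ≤ ρ.getD k 0) (hv2 : ρ.getD k 0 < n)
    (hxA : x ∈ A) (hyA : y ∈ A)
    (hpx : ((prefixPerm n ρ k).symm x : ℕ) = ρ.getD k 0 - 1)
    (hpy : ((prefixPerm n ρ k).symm y : ℕ) = ρ.getD k 0) :
    rkA n ρ A (k + 1) x = rkA n ρ A k x + 1 := by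
  have hxy : x ≠ y := by intro hh; rw [hh] at hpx; omega
  unfold rkA
  have hset : (A.filter fun b =>
        (prefixPerm n ρ (k + 1)).symm b < (prefixPerm n ρ (k + 1)).symm x)
      = insert y (A.filter fun b =>
        (prefixPerm n ρ k).symm b < (prefixPerm n ρ k).symm x) := by
    ext b
    simp only [Finset.mem_filter, Finset.mem_insert, Fin.lt_def, pos_succ hk,
      adjT_valid hv1 hv2, swap_val hv1 hv2, hpx, hpy]
    rcases eq_or_ne b x with rfl | hbx
    · simp only [hpx, hxy, false_or]
      constructor
      · intro hh; split_ifs at hh <;> omega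
      · intro ⟨_, hh⟩; omega
    rcases eq_or_ne b y with rfl | hby
    · simp only [hpy, true_or, iff_true]
      refine ⟨hyA, ?_⟩
      split_ifs <;> omega
    · have h1 := val_ne_of_ne (ρ := ρ) (k := k) hbx
      have h2 := val_ne_of_ne (ρ := ρ) (k := k) hby
      rw [hpx] at h1; rw [hpy] at h2
      simp only [hby, false_or]
      constructor
      · intro hh; split_ifs at hh <;> first | omega | exact ⟨hh.1, by omega⟩
      · intro ⟨hbA, hh⟩
        split_ifs <;> first | omega | exact ⟨hbA, by omega⟩
  rw [hset, Finset.card_insert_of_notMem]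
  simp only [Finset.mem_filter, Fin.lt_def, hpy, hpx, not_and]
  intro _
  omega

lemma rk_succ_y (hk : k < ρ.length) (hv1 : 1 ≤ ρ.getD k 0) (hv2 : ρ.getD k 0 < n)
    (hxA : x ∈ A) (hyA : y ∈ A)
    (hpx : ((prefixPerm n ρ k).symm x : ℕ) = ρ.getD k 0 - 1)
    (hpy : ((prefixPerm n ρ k).symm y : ℕ) = ρ.getD k 0) :
    rkA n ρ A (k + 1) y = rkA n ρ A k x := by
  have hxy : x ≠ y := by intro hh; rw [hh] at hpx; omega
  unfold rkA
  congr 1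
  apply Finset.filter_congr
  intro b _
  simp only [Fin.lt_def, pos_succ hk, adjT_valid hv1 hv2, swap_val hv1 hv2, hpx, hpy]
  rcases eq_or_ne b x with rfl | hbx
  · simp only [hpx]
    split_ifs <;> omega
  rcases eq_or_ne b y with rfl | hby
  · simp only [hpy]
    split_ifs <;> omega
  · have h1 := val_ne_of_ne (ρ := ρ) (k := k) hbx
    have h2 := val_ne_of_ne (ρ := ρ) (k := k) hby
    rw [hpx] at h1; rw [hpy] at h2
    split_ifs <;> omega

lemma rk_succ_other (hk : k < ρ.length) (hv1 : 1 ≤ ρ.getD k 0) (hv2 : ρ.getD k 0 < n)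
    {a : Fin n}
    (hpa1 : ((prefixPerm n ρ k).symm a : ℕ) ≠ ρ.getD k 0 - 1)
    (hpa2 : ((prefixPerm n ρ k).symm a : ℕ) ≠ ρ.getD k 0) :
    rkA n ρ A (k + 1) a = rkA n ρ A k a := by
  unfold rkA
  congr 1
  apply Finset.filter_congr
  intro b _
  simp only [Fin.lt_def, pos_succ hk, adjT_valid hv1 hv2, swap_val hv1 hv2]
  split_ifs <;> omega

end RankUpdate

lemma rk_succ_nocross {A : Finset (Fin n)} {k : ℕ} (hk : k < ρ.length)
    (hv1 : 1 ≤ ρ.getD k 0) (hv2 : ρ.getD k 0 < n) {a : Fin n} (haA : a ∈ A)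
    (hno : ¬(prefixPerm n ρ k ⟨ρ.getD k 0 - 1, by omega⟩ ∈ A ∧
        prefixPerm n ρ k ⟨ρ.getD k 0, hv2⟩ ∈ A)) :
    rkA n ρ A (k + 1) a = rkA n ρ A k a := by
  unfold rkA
  congr 1
  apply Finset.filter_congr
  intro b hbA
  have hf1 : ¬(((prefixPerm n ρ k).symm b : ℕ) = ρ.getD k 0 - 1 ∧
      ((prefixPerm n ρ k).symm a : ℕ) = ρ.getD k 0) := by
    rintro ⟨h1, h2⟩
    apply hno
    have e1 : (prefixPerm n ρ k).symm b = (⟨ρ.getD k 0 - 1, by omega⟩ : Fin n) := Fin.ext h1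
    have e2 : (prefixPerm n ρ k).symm a = (⟨ρ.getD k 0, hv2⟩ : Fin n) := Fin.ext h2
    constructor
    · rw [← e1, Equiv.apply_symm_apply]; exact hbA
    · rw [← e2, Equiv.apply_symm_apply]; exact haA
  have hf2 : ¬(((prefixPerm n ρ k).symm b : ℕ) = ρ.getD k 0 ∧
      ((prefixPerm n ρ k).symm a : ℕ) = ρ.getD k 0 - 1) := by
    rintro ⟨h1, h2⟩
    apply hno
    have e1 : (prefixPerm n ρ k).symm b = (⟨ρ.getD k 0, hv2⟩ : Fin n) := Fin.ext h1
    have e2 : (prefixPerm n ρ k).symm a = (⟨ρ.getD k 0 - 1, by omega⟩ : Fin n) := Fin.ext h2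
    constructor
    · rw [← e2, Equiv.apply_symm_apply]; exact haA
    · rw [← e1, Equiv.apply_symm_apply]; exact hbA
  simp only [Fin.lt_def, pos_succ hk, adjT_valid hv1 hv2, swap_val hv1 hv2]
  split_ifs <;> omega

lemma sim (hρ : ∀ r ∈ ρ, 1 ≤ r ∧ r < n) {A : Finset (Fin n)} (hA : A.card = 4) :
    ∀ m, m ≤ ρ.length → ∀ j : Fin 4, ∀ v : Fin 4,
      (v : ℕ) = rkA n ρ A m ((A.orderIsoOfFin hA j : Fin n)) →
      (((List.range m).filterMap (FA n ρ A)).map (adjT 4)).prod v = j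
  | 0, _, j, v, hv => by
    simp only [List.range_zero, List.filterMap_nil, List.map_nil, List.prod_nil,
      Equiv.Perm.coe_one, id_eq]
    apply Fin.ext
    rw [hv]
    simpa using rk_zero (ρ := ρ) hA j
  | (m + 1), hm, j, v, hv => by
    have hmlt : m < ρ.length := by omega
    obtain ⟨hv1, hv2⟩ := letter_valid hρ hmlt
    rw [List.range_succ, List.filterMap_append, List.map_append, List.prod_append]
    set ej : Fin n := (A.orderIsoOfFin hA j : Fin n) with hejdef
    have hejA : ej ∈ A := (A.orderIsoOfFin hA j).2
    by_cases hc : prefixPerm n ρ m ⟨ρ.getD m 0 - 1, by omega⟩ ∈ A ∧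
        prefixPerm n ρ m ⟨ρ.getD m 0, hv2⟩ ∈ A
    · -- crossing step
      set x : Fin n := prefixPerm n ρ m ⟨ρ.getD m 0 - 1, by omega⟩ with hxdef
      set y : Fin n := prefixPerm n ρ m ⟨ρ.getD m 0, hv2⟩ with hydef
      have hpx : ((prefixPerm n ρ m).symm x : ℕ) = ρ.getD m 0 - 1 := by
        rw [hxdef, Equiv.symm_apply_apply]
      have hpy : ((prefixPerm n ρ m).symm y : ℕ) = ρ.getD m 0 := by
        rw [hydef, Equiv.symm_apply_apply]
      have hcfil : (A.filter fun b =>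
          ((prefixPerm n ρ m).symm b : ℕ) < ρ.getD m 0 - 1).card = rkA n ρ A m x := by
        unfold rkA
        congr 1
        apply Finset.filter_congr
        intro b _
        simp [Fin.lt_def, hpx]
      have hsome : List.filterMap (FA n ρ A) [m] = [rkA n ρ A m x + 1] := by
        have hFA : FA n ρ A m = some (rkA n ρ A m x + 1) := by
          rw [FA_some hv1 hv2 hc.1 hc.2, hcfil]
        simp [List.filterMap_cons, hFA]
      rw [hsome]
      have hrky : rkA n ρ A m y = rkA n ρ A m x + 1 :=
        rk_y_eq hv1 hv2 hc.1 hc.2 hpx hpy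
      have hbnd : rkA n ρ A m x + 1 < 4 := by
        have := rk_lt_card (ρ := ρ) (k := m) hc.2
        omega
      set c : ℕ := rkA n ρ A m x with hcdef
      have hadj : adjT 4 (c + 1) = Equiv.swap (⟨c + 1 - 1, by omega⟩ : Fin 4) ⟨c + 1, hbnd⟩ :=
        adjT_valid (by omega) hbnd
      simp only [List.map_cons, List.map_nil, List.prod_cons, List.prod_nil, mul_one]
      rw [Equiv.Perm.mul_apply]
      refine sim hρ hA m (by omega) j _ ?_
      change _ = rkA n ρ A m ej
      rw [hadj, swap_val (n := 4) (by omega) hbnd]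
      have hvall : (v : ℕ) = rkA n ρ A (m + 1) ej := hv
      rcases eq_or_ne ej x with hex | hnex
      · have : rkA n ρ A (m + 1) ej = c + 1 := by
          rw [hex, rk_succ_x hmlt hv1 hv2 hc.1 hc.2 hpx hpy]
        rw [hex]
        split_ifs <;> omega
      rcases eq_or_ne ej y with hey | hney
      · have : rkA n ρ A (m + 1) ej = c := by
          rw [hey, rk_succ_y hmlt hv1 hv2 hc.1 hc.2 hpx hpy]
        rw [hey, hrky]
        split_ifs <;> omega
      · have hne1 : ((prefixPerm n ρ m).symm ej : ℕ) ≠ ρ.getD m 0 - 1 := by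
          rw [← hpx]; exact val_ne_of_ne (ρ := ρ) (k := m) hnex
        have hne2 : ((prefixPerm n ρ m).symm ej : ℕ) ≠ ρ.getD m 0 := by
          rw [← hpy]; exact val_ne_of_ne (ρ := ρ) (k := m) hney
        have hrkeq : rkA n ρ A (m + 1) ej = rkA n ρ A m ej :=
          rk_succ_other hmlt hv1 hv2 hne1 hne2
        have hnc : rkA n ρ A m ej ≠ c := by
          intro hh; exact hnex (rk_inj hejA hc.1 (by rw [hh]))
        have hnc1 : rkA n ρ A m ej ≠ c + 1 := by
          intro hh; exact hney (rk_inj hejA hc.2 (by rw [hh, ← hrky]))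
        split_ifs <;> omega
    · -- non-crossing step
      have hnone : List.filterMap (FA n ρ A) [m] = [] := by
        have hFA : FA n ρ A m = none := FA_none_case hv1 hv2 hc
        simp [List.filterMap_cons, hFA]
      rw [hnone]
      simp only [List.map_nil, List.prod_nil, mul_one]
      refine sim hρ hA m (by omega) j _ ?_
      change _ = rkA n ρ A m ej
      rw [hv, rk_succ_nocross hmlt hv1 hv2 hejA hc]

lemma induced_prod (h : IsReducedDecomp n (Fin.revPerm : Equiv.Perm (Fin n)) ρ)
    {A : Finset (Fin n)} (hA : A.card = 4) :
    ((inducedWord n ρ A).map (adjT 4)).prod = (Fin.revPerm : Equiv.Perm (Fin 4)) := by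
  apply Equiv.ext
  intro v
  rw [inducedWord_eq]
  have hlast := prefixPerm_length (n := n) h.2.1
  have hrk := rk_last hA hlast (Fin.rev v)
  have hval : (v : ℕ) = rkA n ρ A ρ.length ((A.orderIsoOfFin hA (Fin.rev v) : Fin n)) := by
    rw [hrk, Fin.val_rev]
    have := v.isLt
    omega
  have := sim h.1 hA ρ.length le_rfl (Fin.rev v) v hval
  rw [this]
  simp

lemma induced_letters (hρ : ∀ r ∈ ρ, 1 ≤ r ∧ r < n) {A : Finset (Fin n)} (hA : A.card = 4) :
    ∀ r ∈ inducedWord n ρ A, 1 ≤ r ∧ r < 4 := by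
  intro r hr
  rw [inducedWord_eq] at hr
  obtain ⟨k, hk, hfk⟩ := List.mem_filterMap.1 hr
  have hklt : k < ρ.length := List.mem_range.1 hk
  obtain ⟨hv1, hv2⟩ := letter_valid hρ hklt
  by_cases hc : prefixPerm n ρ k ⟨ρ.getD k 0 - 1, by omega⟩ ∈ A ∧
      prefixPerm n ρ k ⟨ρ.getD k 0, hv2⟩ ∈ A
  · rw [FA_some hv1 hv2 hc.1 hc.2] at hfk
    have hr' := Option.some_inj.1 hfk
    set x : Fin n := prefixPerm n ρ k ⟨ρ.getD k 0 - 1, by omega⟩ with hxdef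
    set y : Fin n := prefixPerm n ρ k ⟨ρ.getD k 0, hv2⟩ with hydef
    have hpx : ((prefixPerm n ρ k).symm x : ℕ) = ρ.getD k 0 - 1 := by
      rw [hxdef, Equiv.symm_apply_apply]
    have hpy : ((prefixPerm n ρ k).symm y : ℕ) = ρ.getD k 0 := by
      rw [hydef, Equiv.symm_apply_apply]
    have hcfil : (A.filter fun b =>
        ((prefixPerm n ρ k).symm b : ℕ) < ρ.getD k 0 - 1).card = rkA n ρ A k x := by
      unfold rkA
      congr 1
      apply Finset.filter_congr
      intro b _
      simp [Fin.lt_def, hpx]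
    have hrky : rkA n ρ A k y = rkA n ρ A k x + 1 := rk_y_eq hv1 hv2 hc.1 hc.2 hpx hpy
    have hbnd : rkA n ρ A k y < 4 := by
      have := rk_lt_card (ρ := ρ) (k := k) hc.2
      omega
    rw [hcfil] at hr'
    omega
  · rw [FA_none_case hv1 hv2 hc] at hfk
    exact absurd hfk (by simp)

lemma orderIso_coe_lt {A : Finset (Fin n)} (hA : A.card = 4) {s t : Fin 4} :
    ((A.orderIsoOfFin hA s : Fin n) < (A.orderIsoOfFin hA t : Fin n)) ↔ s < t := by
  constructor
  · intro hh
    exact (A.orderIsoOfFin hA).lt_iff_lt.1 (Subtype.coe_lt_coe.1 hh)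
  · intro hh
    exact Subtype.coe_lt_coe.2 ((A.orderIsoOfFin hA).lt_iff_lt.2 hh)

lemma orderIso_coe_inj {A : Finset (Fin n)} (hA : A.card = 4) {s t : Fin 4}
    (hst : (A.orderIsoOfFin hA s : Fin n) = (A.orderIsoOfFin hA t : Fin n)) : s = t :=
  (A.orderIsoOfFin hA).injective (Subtype.ext hst)

lemma filterMap_range_length (f : ℕ → Option ℕ) :
    ∀ m : ℕ, ((List.range m).filterMap f).length
      = ((Finset.range m).filter fun k => (f k).isSome).card
  | 0 => by simp
  | (m + 1) => by
    rw [List.range_succ, List.filterMap_append, List.length_append,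
      Finset.range_add_one, Finset.filter_insert, filterMap_range_length f m]
    cases hfm : f m
    · rw [if_neg (by simp [hfm])]
      simp [List.filterMap_cons, hfm]
    · rw [if_pos (by simp [hfm]), Finset.card_insert_of_notMem (by simp)]
      simp [List.filterMap_cons, hfm]

lemma filterMap_range_count (f : ℕ → Option ℕ) (a : ℕ) :
    ∀ m : ℕ, ((List.range m).filterMap f).count a
      = ((Finset.range m).filter fun k => f k = some a).card
  | 0 => by simp
  | (m + 1) => by
    rw [List.range_succ, List.filterMap_append, List.count_append,
      Finset.range_add_one, Finset.filter_insert, filterMap_range_count f a m]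
    by_cases hf : f m = some a
    · rw [if_pos hf, Finset.card_insert_of_notMem (by simp)]
      simp [List.filterMap_cons, hf, List.count_cons]
    · rw [if_neg hf]
      cases hfm : f m
      · simp [List.filterMap_cons, hfm]
      · rename_i b
        have hba : ¬(b = a) := by rintro rfl; exact hf hfm
        simp [List.filterMap_cons, hfm, List.count_cons, hba]

lemma FA_isSome_iff (hρ : ∀ r ∈ ρ, 1 ≤ r ∧ r < n) {A : Finset (Fin n)} (hA : A.card = 4)
    {k : ℕ} (hklt : k < ρ.length) :
    (FA n ρ A k).isSome ↔ ∃ p : Fin 4 × Fin 4, p.1 < p.2 ∧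
      Crosses n ρ k ((A.orderIsoOfFin hA p.1 : Fin n)) ((A.orderIsoOfFin hA p.2 : Fin n)) := by
  obtain ⟨hv1, hv2⟩ := letter_valid hρ hklt
  constructor
  · intro hs
    by_cases hc : prefixPerm n ρ k ⟨ρ.getD k 0 - 1, by omega⟩ ∈ A ∧
        prefixPerm n ρ k ⟨ρ.getD k 0, hv2⟩ ∈ A
    · obtain ⟨jx, hjx⟩ := (A.orderIsoOfFin hA).surjective
        ⟨prefixPerm n ρ k ⟨ρ.getD k 0 - 1, by omega⟩, hc.1⟩
      obtain ⟨jy, hjy⟩ := (A.orderIsoOfFin hA).surjective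
        ⟨prefixPerm n ρ k ⟨ρ.getD k 0, hv2⟩, hc.2⟩
      have hjx' : (A.orderIsoOfFin hA jx : Fin n)
          = prefixPerm n ρ k ⟨ρ.getD k 0 - 1, by omega⟩ := by rw [hjx]
      have hjy' : (A.orderIsoOfFin hA jy : Fin n)
          = prefixPerm n ρ k ⟨ρ.getD k 0, hv2⟩ := by rw [hjy]
      have hpx : ((prefixPerm n ρ k).symm (A.orderIsoOfFin hA jx : Fin n) : ℕ)
          = ρ.getD k 0 - 1 := by rw [hjx', Equiv.symm_apply_apply]
      have hpy : ((prefixPerm n ρ k).symm (A.orderIsoOfFin hA jy : Fin n) : ℕ)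
          = ρ.getD k 0 := by rw [hjy', Equiv.symm_apply_apply]
      have hne : jx ≠ jy := by
        intro hh
        rw [hh, hpy] at hpx
        omega
      rcases lt_or_gt_of_ne hne with hlt | hlt
      · exact ⟨(jx, jy), hlt, ⟨⟨hv1, hv2⟩, Or.inl ⟨hpx, hpy⟩⟩⟩
      · exact ⟨(jy, jx), hlt, ⟨⟨hv1, hv2⟩, Or.inr ⟨hpy, hpx⟩⟩⟩
    · rw [FA_none_case hv1 hv2 hc] at hs
      simp at hs
  · rintro ⟨p, -, ⟨-, hcr⟩⟩
    have hc : prefixPerm n ρ k ⟨ρ.getD k 0 - 1, by omega⟩ ∈ A ∧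
        prefixPerm n ρ k ⟨ρ.getD k 0, hv2⟩ ∈ A := by
      rcases hcr with ⟨h1, h2⟩ | ⟨h1, h2⟩
      · have e1 : (prefixPerm n ρ k).symm (A.orderIsoOfFin hA p.1 : Fin n)
            = (⟨ρ.getD k 0 - 1, by omega⟩ : Fin n) := Fin.ext h1
        have e2 : (prefixPerm n ρ k).symm (A.orderIsoOfFin hA p.2 : Fin n)
            = (⟨ρ.getD k 0, hv2⟩ : Fin n) := Fin.ext h2
        constructor
        · rw [← e1, Equiv.apply_symm_apply]; exact (A.orderIsoOfFin hA p.1).2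
        · rw [← e2, Equiv.apply_symm_apply]; exact (A.orderIsoOfFin hA p.2).2
      · have e1 : (prefixPerm n ρ k).symm (A.orderIsoOfFin hA p.1 : Fin n)
            = (⟨ρ.getD k 0, hv2⟩ : Fin n) := Fin.ext h1
        have e2 : (prefixPerm n ρ k).symm (A.orderIsoOfFin hA p.2 : Fin n)
            = (⟨ρ.getD k 0 - 1, by omega⟩ : Fin n) := Fin.ext h2
        constructor
        · rw [← e2, Equiv.apply_symm_apply]; exact (A.orderIsoOfFin hA p.2).2
        · rw [← e1, Equiv.apply_symm_apply]; exact (A.orderIsoOfFin hA p.1).2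
    rw [FA_some hv1 hv2 hc.1 hc.2]
    simp

lemma induced_length (h : IsReducedDecomp n (Fin.revPerm : Equiv.Perm (Fin n)) ρ)
    {A : Finset (Fin n)} (hA : A.card = 4) :
    (inducedWord n ρ A).length = 6 := by
  classical
  rw [inducedWord_eq, filterMap_range_length]
  set P4 : Finset (Fin 4 × Fin 4) := Finset.univ.filter fun p => p.1 < p.2 with hP4
  have hunion : ((Finset.range ρ.length).filter fun k => (FA n ρ A k).isSome)
      = P4.biUnion fun p => (Finset.range ρ.length).filter fun k =>
          Crosses n ρ k ((A.orderIsoOfFin hA p.1 : Fin n)) ((A.orderIsoOfFin hA p.2 : Fin n)) := by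
    ext k
    simp only [Finset.mem_filter, Finset.mem_range, Finset.mem_biUnion, hP4, Finset.mem_univ,
      true_and]
    constructor
    · rintro ⟨hklt, hs⟩
      obtain ⟨p, hp, hcr⟩ := (FA_isSome_iff h.1 hA hklt).1 hs
      exact ⟨p, hp, hklt, hcr⟩
    · rintro ⟨p, hp, hklt, hcr⟩
      exact ⟨hklt, (FA_isSome_iff h.1 hA hklt).2 ⟨p, hp, hcr⟩⟩
  rw [hunion, Finset.card_biUnion]
  · have hone : ∀ p ∈ P4, ((Finset.range ρ.length).filter fun k =>
        Crosses n ρ k ((A.orderIsoOfFin hA p.1 : Fin n))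
          ((A.orderIsoOfFin hA p.2 : Fin n))).card = 1 := by
      intro p hp
      have hlt : (A.orderIsoOfFin hA p.1 : Fin n) < (A.orderIsoOfFin hA p.2 : Fin n) :=
        (orderIso_coe_lt hA).2 (by simpa [hP4] using hp)
      exact cross_once h hlt
    rw [Finset.sum_congr rfl hone]
    simp [hP4]
    decide
  · intro p hp q hq hpq
    simp only [Finset.disjoint_left, Finset.mem_filter, Finset.mem_range]
    rintro k ⟨hklt, hcrp⟩ ⟨-, hcrq⟩
    apply hpq
    have hp' : p.1 < p.2 := by simpa [hP4] using hp
    have hq' : q.1 < q.2 := by simpa [hP4] using hq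
    obtain ⟨-, hcp⟩ := hcrp
    obtain ⟨-, hcq⟩ := hcrq
    obtain ⟨hv1, hv2⟩ := letter_valid h.1 hklt
    have hinj : ∀ s t : Fin 4,
        ((prefixPerm n ρ k).symm (A.orderIsoOfFin hA s : Fin n) : ℕ)
          = ((prefixPerm n ρ k).symm (A.orderIsoOfFin hA t : Fin n) : ℕ) → s = t := by
      intro s t hst
      exact orderIso_coe_inj hA ((prefixPerm n ρ k).symm.injective (Fin.ext hst))
    rcases hcp with ⟨hp1, hp2⟩ | ⟨hp1, hp2⟩ <;> rcases hcq with ⟨hq1, hq2⟩ | ⟨hq1, hq2⟩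
    · have e1 := hinj p.1 q.1 (by rw [hp1, hq1])
      have e2 := hinj p.2 q.2 (by rw [hp2, hq2])
      exact Prod.ext e1 e2
    · have e1 := hinj p.1 q.2 (by rw [hp1, hq2])
      have e2 := hinj p.2 q.1 (by rw [hp2, hq1])
      rw [e1, e2] at hp'
      exact absurd hq' (by omega)
    · have e1 := hinj p.1 q.2 (by rw [hp1, hq2])
      have e2 := hinj p.2 q.1 (by rw [hp2, hq1])
      rw [e1, e2] at hp'
      exact absurd hq' (by omega)
    · have e1 := hinj p.1 q.1 (by rw [hp1, hq1])
      have e2 := hinj p.2 q.2 (by rw [hp2, hq2])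
      exact Prod.ext e1 e2

def words3 : ℕ → List (List ℕ)
  | 0 => [[]]
  | m + 1 => (words3 m).flatMap fun t => [1 :: t, 2 :: t, 3 :: t]

lemma mem_words3 : ∀ (w : List ℕ), (∀ r ∈ w, 1 ≤ r ∧ r < 4) → w ∈ words3 w.length
  | [], _ => by simp [words3]
  | (a :: t), hw => by
    have ht : t ∈ words3 t.length := mem_words3 t fun r hr => hw r (List.mem_cons_of_mem a hr)
    obtain ⟨ha1, ha2⟩ : 1 ≤ a ∧ a < 4 := hw a List.mem_cons_self
    simp only [List.length_cons, words3, List.mem_flatMap]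
    refine ⟨t, ht, ?_⟩
    interval_cases a <;> simp

set_option maxRecDepth 10000 in
lemma classify : ∀ w ∈ words3 6, ((w.map (adjT 4)).prod = (Fin.revPerm : Equiv.Perm (Fin 4))) →
    ((w.count 2 = 2 ∨ w.count 2 = 3) ∧
      (w ∈ [[1,2,3,2,1,2],[3,2,1,2,3,2],[2,1,2,3,2,1],[2,3,2,1,2,3]] ↔ w.count 2 = 3)) := by
  decide

lemma count2_classified (h : IsReducedDecomp n (Fin.revPerm : Equiv.Perm (Fin n)) ρ)
    {A : Finset (Fin n)} (hA : A.card = 4) :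
    ((inducedWord n ρ A).count 2 = 2 ∨ (inducedWord n ρ A).count 2 = 3) ∧
      (inducedWord n ρ A ∈ [[1,2,3,2,1,2],[3,2,1,2,3,2],[2,1,2,3,2,1],[2,3,2,1,2,3]]
        ↔ (inducedWord n ρ A).count 2 = 3) := by
  apply classify
  · rw [← induced_length h hA]
    exact mem_words3 _ (induced_letters h.1 hA)
  · exact induced_prod h hA

lemma card_pos_filter {k : ℕ} (P : ℕ → Prop) [DecidablePred P] :
    (Finset.univ.filter fun a : Fin n => P ((prefixPerm n ρ k).symm a : ℕ)).card
      = (Finset.univ.filter fun b : Fin n => P (b : ℕ)).card := by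
  apply Finset.card_bij' (fun a _ => (prefixPerm n ρ k).symm a)
    (fun b _ => prefixPerm n ρ k b)
  · intro a ha
    simp only [Finset.mem_filter, Finset.mem_univ, true_and] at ha ⊢
    exact ha
  · intro b hb
    simp only [Finset.mem_filter, Finset.mem_univ, true_and] at hb ⊢
    rw [Equiv.symm_apply_apply]
    exact hb
  · intro a _
    simp
  · intro b _
    simp

lemma card_val_lt {c : ℕ} (hc : c < n) :
    (Finset.univ.filter fun b : Fin n => (b : ℕ) < c).card = c := by
  have : (Finset.univ.filter fun b : Fin n => (b : ℕ) < c) = Finset.Iio (⟨c, hc⟩ : Fin n) := by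
    ext b
    simp [Fin.lt_def]
  rw [this, Fin.card_Iio]

lemma card_val_gt {c : ℕ} (hc : c < n) :
    (Finset.univ.filter fun b : Fin n => c < (b : ℕ)).card = n - 1 - c := by
  have : (Finset.univ.filter fun b : Fin n => c < (b : ℕ)) = Finset.Ioi (⟨c, hc⟩ : Fin n) := by
    ext b
    simp [Fin.lt_def]
  rw [this, Fin.card_Ioi]

lemma step_count (hρ : ∀ r ∈ ρ, 1 ≤ r ∧ r < n) {k : ℕ} (hklt : k < ρ.length) :
    (Finset.univ.filter fun A : Finset (Fin n) => A.card = 4 ∧ FA n ρ A k = some 2).card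
      = (ρ.getD k 0 - 1) * (n - 1 - ρ.getD k 0) := by
  classical
  obtain ⟨hv1, hv2⟩ := letter_valid hρ hklt
  set i : ℕ := ρ.getD k 0 with hidef
  set u := prefixPerm n ρ k with hudef
  set x : Fin n := u ⟨i - 1, by omega⟩ with hxdef
  set y : Fin n := u ⟨i, hv2⟩ with hydef
  have hpx : ((u.symm x : ℕ)) = i - 1 := by rw [hxdef, Equiv.symm_apply_apply]
  have hpy : ((u.symm y : ℕ)) = i := by rw [hydef, Equiv.symm_apply_apply]
  have hxy : x ≠ y := by
    rw [hxdef, hydef]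
    intro hh
    have := u.injective hh
    simp only [Fin.mk.injEq] at this
    omega
  have hchar : ∀ A : Finset (Fin n),
      (A.card = 4 ∧ FA n ρ A k = some 2) ↔
        (A.card = 4 ∧ x ∈ A ∧ y ∈ A ∧
          (A.filter fun b => ((u.symm b : ℕ)) < i - 1).card = 1) := by
    intro A
    constructor
    · rintro ⟨hA4, hFA⟩
      by_cases hc : x ∈ A ∧ y ∈ A
      · rw [FA_some hv1 hv2 hc.1 hc.2] at hFA
        have h2 := Option.some_inj.1 hFA
        rw [← hudef, ← hidef] at h2
        exact ⟨hA4, hc.1, hc.2, by omega⟩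
      · rw [FA_none_case hv1 hv2 hc] at hFA
        exact absurd hFA (by simp)
    · rintro ⟨hA4, hxA, hyA, hfil⟩
      refine ⟨hA4, ?_⟩
      rw [FA_some hv1 hv2 hxA hyA]
      rw [← hudef, ← hidef, hfil]
  have hset : (Finset.univ.filter fun A : Finset (Fin n) => A.card = 4 ∧ FA n ρ A k = some 2)
      = Finset.univ.filter fun A : Finset (Fin n) =>
          A.card = 4 ∧ x ∈ A ∧ y ∈ A ∧
            (A.filter fun b => ((u.symm b : ℕ)) < i - 1).card = 1 := by
    apply Finset.filter_congr
    intro A _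
    exact hchar A
  rw [hset]
  set D1 := Finset.univ.filter fun a : Fin n => ((u.symm a : ℕ)) < i - 1 with hD1
  set D2 := Finset.univ.filter fun a : Fin n => i < ((u.symm a : ℕ)) with hD2
  have hcard : (D1 ×ˢ D2).card =
      (Finset.univ.filter fun A : Finset (Fin n) =>
        A.card = 4 ∧ x ∈ A ∧ y ∈ A ∧
          (A.filter fun b => ((u.symm b : ℕ)) < i - 1).card = 1).card := by
    apply Finset.card_bij (fun p _ => insert p.1 (insert p.2 ({x, y} : Finset (Fin n))))
    · rintro ⟨a, b⟩ hab
      simp only [Finset.mem_product, hD1, hD2, Finset.mem_filter, Finset.mem_univ,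
        true_and] at hab
      obtain ⟨hpa, hpb⟩ := hab
      have hax : a ≠ x := by intro hh; rw [hh, hpx] at hpa; omega
      have hay : a ≠ y := by intro hh; rw [hh, hpy] at hpa; omega
      have hbx : b ≠ x := by intro hh; rw [hh, hpx] at hpb; omega
      have hby : b ≠ y := by intro hh; rw [hh, hpy] at hpb; omega
      have hab' : a ≠ b := by
        intro hh
        rw [hh] at hpa
        omega
      simp only [Finset.mem_filter, Finset.mem_univ, true_and]
      refine ⟨?_, by simp, by simp, ?_⟩
      · rw [Finset.card_insert_of_notMem (by simp [hab', hax, hay]),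
          Finset.card_insert_of_notMem (by simp [hbx, hby]),
          Finset.card_insert_of_notMem (by simp [hxy]), Finset.card_singleton]
      · have : ((insert a (insert b ({x, y} : Finset (Fin n)))).filter
            fun c => ((u.symm c : ℕ)) < i - 1) = {a} := by
          ext c
          simp only [Finset.mem_filter, Finset.mem_insert, Finset.mem_singleton]
          constructor
          · rintro ⟨rfl | rfl | rfl | rfl, hlt⟩
            · rfl
            · omega
            · rw [hpx] at hlt; omega
            · rw [hpy] at hlt; omega
          · rintro rfl
            exact ⟨Or.inl rfl, hpa⟩
        rw [this, Finset.card_singleton]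
    · rintro ⟨a, b⟩ hab ⟨a', b'⟩ hab' heq
      simp only [Finset.mem_product, hD1, hD2, Finset.mem_filter, Finset.mem_univ,
        true_and] at hab hab'
      obtain ⟨hpa, hpb⟩ := hab
      obtain ⟨hpa', hpb'⟩ := hab'
      have hmema : a ∈ insert a' (insert b' ({x, y} : Finset (Fin n))) := by
        rw [← heq]; simp
      have hmemb : b ∈ insert a' (insert b' ({x, y} : Finset (Fin n))) := by
        rw [← heq]; simp
      simp only [Finset.mem_insert, Finset.mem_singleton] at hmema hmemb
      have ha : a = a' := by
        rcases hmema with hh | hh | hh | hh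
        · exact hh
        · rw [hh] at hpa; omega
        · rw [hh, hpx] at hpa; omega
        · rw [hh, hpy] at hpa; omega
      have hb : b = b' := by
        rcases hmemb with hh | hh | hh | hh
        · rw [hh] at hpb; omega
        · exact hh
        · rw [hh, hpx] at hpb; omega
        · rw [hh, hpy] at hpb; omega
      simp [ha, hb]
    · intro A hA
      simp only [Finset.mem_filter, Finset.mem_univ, true_and] at hA
      obtain ⟨hA4, hxA, hyA, hfil⟩ := hA
      obtain ⟨a, hafil⟩ := Finset.card_eq_one.1 hfil
      have haA : a ∈ A ∧ ((u.symm a : ℕ)) < i - 1 := by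
        have : a ∈ A.filter fun b => ((u.symm b : ℕ)) < i - 1 := by rw [hafil]; simp
        simpa using this
      have hax : a ≠ x := by intro hh; rw [hh, hpx] at haA; omega
      have hay : a ≠ y := by intro hh; rw [hh, hpy] at haA; omega
      have hrest : (A \ ({a, x, y} : Finset (Fin n))).card = 1 := by
        rw [Finset.card_sdiff_of_subset]
        · rw [hA4, Finset.card_insert_of_notMem (by simp [hax, hay]),
            Finset.card_insert_of_notMem (by simp [hxy]), Finset.card_singleton]
        · intro c hc
          simp only [Finset.mem_insert, Finset.mem_singleton] at hc
          rcases hc with rfl | rfl | rfl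
          · exact haA.1
          · exact hxA
          · exact hyA
      obtain ⟨b, hb⟩ := Finset.card_eq_one.1 hrest
      have hbA : b ∈ A ∧ b ∉ ({a, x, y} : Finset (Fin n)) := by
        have : b ∈ A \ ({a, x, y} : Finset (Fin n)) := by rw [hb]; simp
        simpa using this
      have hbax : b ≠ a ∧ b ≠ x ∧ b ≠ y := by
        have := hbA.2
        simp only [Finset.mem_insert, Finset.mem_singleton] at this
        tauto
      have hbfil : ¬(((u.symm b : ℕ)) < i - 1) := by
        intro hh
        have : b ∈ A.filter fun c => ((u.symm c : ℕ)) < i - 1 :=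
          Finset.mem_filter.2 ⟨hbA.1, hh⟩
        rw [hafil] at this
        simp only [Finset.mem_singleton] at this
        exact hbax.1 this
      have hbne1 : ((u.symm b : ℕ)) ≠ i - 1 := by
        rw [← hpx]
        exact val_ne_of_ne (ρ := ρ) (k := k) hbax.2.1
      have hbne2 : ((u.symm b : ℕ)) ≠ i := by
        rw [← hpy]
        exact val_ne_of_ne (ρ := ρ) (k := k) hbax.2.2
      refine ⟨(a, b), ?_, ?_⟩
      · simp only [Finset.mem_product, hD1, hD2, Finset.mem_filter, Finset.mem_univ, true_and]
        exact ⟨haA.2, by omega⟩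
      · -- A = {a, b, x, y}
        apply Finset.eq_of_subset_of_card_le
        · intro c hc
          simp only [Finset.mem_insert, Finset.mem_singleton] at hc
          rcases hc with rfl | rfl | rfl | rfl
          · exact haA.1
          · exact hbA.1
          · exact hxA
          · exact hyA
        · rw [hA4]
          have hanb : a ≠ b := fun hh => hbax.1 hh.symm
          have hcard4 : ({a, b, x, y} : Finset (Fin n)).card = 4 := by
            rw [Finset.card_insert_of_notMem (by simp [hanb, hax, hay]),
              Finset.card_insert_of_notMem (by simp [hbax.2.1, hbax.2.2]),
              Finset.card_insert_of_notMem (by simp [hxy]), Finset.card_singleton]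
          exact le_of_eq hcard4.symm
  rw [← hcard, Finset.card_product, hD1, hD2,
    card_pos_filter (fun m => m < i - 1), card_pos_filter (fun m => i < m),
    card_val_lt (by omega), card_val_gt hv2]

lemma sum_range_getD {M : Type*} [AddCommMonoid M] (f : ℕ → M) :
    ∀ L : List ℕ, ∑ k ∈ Finset.range L.length, f (L.getD k 0) = (L.map f).sum
  | [] => by simp
  | (a :: t) => by
    rw [List.length_cons, Finset.sum_range_succ']
    simp only [List.getD_cons_succ, List.getD_cons_zero, List.map_cons, List.sum_cons]
    rw [sum_range_getD f t, add_comm]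

lemma double_count (h : IsReducedDecomp n (Fin.revPerm : Equiv.Perm (Fin n)) ρ) :
    ∑ A ∈ (Finset.univ.filter fun A : Finset (Fin n) => A.card = 4),
        (inducedWord n ρ A).count 2
      = ∑ k ∈ Finset.range ρ.length, (ρ.getD k 0 - 1) * (n - 1 - ρ.getD k 0) := by
  classical
  have hA : ∀ A : Finset (Fin n), (inducedWord n ρ A).count 2
      = ∑ k ∈ Finset.range ρ.length, if FA n ρ A k = some 2 then 1 else 0 := by
    intro A
    rw [inducedWord_eq, filterMap_range_count, Finset.card_filter]
  rw [Finset.sum_congr rfl fun A _ => hA A, Finset.sum_comm]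
  apply Finset.sum_congr rfl
  intro k hk
  rw [← Finset.card_filter, Finset.filter_filter, step_count h.1 (Finset.mem_range.1 hk)]

end CXS

theorem countX_subnetworks_longest_element
    (n : ℕ) (ρ : List ℕ)
    (h : IsReducedDecomp n (Fin.revPerm : Equiv.Perm (Fin n)) ρ) :
    ((Finset.univ.filter fun A : Finset (Fin n) =>
        A.card = 4 ∧ inducedWord n ρ A ∈
          [[1,2,3,2,1,2], [3,2,1,2,3,2], [2,1,2,3,2,1], [2,3,2,1,2,3]]).card : ℤ) =
      (ρ.map fun i => ((i : ℤ) - 1) * ((n : ℤ) - (i : ℤ) - 1)).sum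
        - 2 * (n.choose 4 : ℤ) := by
  classical
  have hcoe : (do let a ← ρ; pure ((a : ℤ))) = List.map (fun a : ℕ => (a : ℤ)) ρ := by
    show (List.flatMap (fun a : ℕ => [(a : ℤ)]) ρ) = _
    rw [← List.map_eq_flatMap]
  rw [hcoe, List.map_map]
  have hsplit : (Finset.univ.filter fun A : Finset (Fin n) =>
      A.card = 4 ∧ inducedWord n ρ A ∈
        [[1,2,3,2,1,2], [3,2,1,2,3,2], [2,1,2,3,2,1], [2,3,2,1,2,3]])
      = (Finset.univ.filter fun A : Finset (Fin n) => A.card = 4).filter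
          (fun A => inducedWord n ρ A ∈
            [[1,2,3,2,1,2], [3,2,1,2,3,2], [2,1,2,3,2,1], [2,3,2,1,2,3]]) := by
    rw [Finset.filter_filter]
  rw [hsplit]
  have h1 : (((Finset.univ.filter fun A : Finset (Fin n) => A.card = 4).filter
      (fun A => inducedWord n ρ A ∈
        [[1,2,3,2,1,2], [3,2,1,2,3,2], [2,1,2,3,2,1], [2,3,2,1,2,3]])).card : ℤ)
      = ∑ A ∈ (Finset.univ.filter fun A : Finset (Fin n) => A.card = 4),
          (((inducedWord n ρ A).count 2 : ℤ) - 2) := by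
    rw [Finset.natCast_card_filter]
    apply Finset.sum_congr rfl
    intro A hAmem
    have hA4 : A.card = 4 := by
      have := Finset.mem_filter.1 hAmem
      exact this.2
    obtain ⟨h23, hiff⟩ := CXS.count2_classified h hA4
    by_cases hmem : inducedWord n ρ A ∈
        [[1,2,3,2,1,2], [3,2,1,2,3,2], [2,1,2,3,2,1], [2,3,2,1,2,3]]
    · rw [if_pos hmem]
      have := hiff.1 hmem
      omega
    · rw [if_neg hmem]
      have hc2 : (inducedWord n ρ A).count 2 = 2 := by
        rcases h23 with hh | hh
        · exact hh
        · exact absurd (hiff.2 hh) hmem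
      omega
  rw [h1, Finset.sum_sub_distrib, Finset.sum_const, ← Nat.cast_sum, CXS.double_count h]
  have hcard : (Finset.univ.filter fun A : Finset (Fin n) => A.card = 4).card
      = n.choose 4 := by
    rw [show (Finset.univ.filter fun A : Finset (Fin n) => A.card = 4)
        = Finset.powersetCard 4 (Finset.univ : Finset (Fin n)) from by
      rw [Finset.powersetCard_eq_filter, Finset.powerset_univ]]
    rw [Finset.card_powersetCard, Finset.card_fin]
  have hsum : ((∑ k ∈ Finset.range ρ.length,
        (ρ.getD k 0 - 1) * (n - 1 - ρ.getD k 0) : ℕ) : ℤ)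
      = (ρ.map ((fun i : ℤ => (i - 1) * ((n : ℤ) - i - 1)) ∘ (fun a : ℕ => (a : ℤ)))).sum := by
    rw [Nat.cast_sum,
      ← CXS.sum_range_getD ((fun i : ℤ => (i - 1) * ((n : ℤ) - i - 1)) ∘ (fun a : ℕ => (a : ℤ))) ρ]
    apply Finset.sum_congr rfl
    intro k hk
    obtain ⟨hv1, hv2⟩ := CXS.letter_valid h.1 (Finset.mem_range.1 hk)
    have e1 : ((ρ.getD k 0 - 1 : ℕ) : ℤ) = (ρ.getD k 0 : ℤ) - 1 := by omega
    have e2 : ((n - 1 - ρ.getD k 0 : ℕ) : ℤ) = (n : ℤ) - (ρ.getD k 0 : ℤ) - 1 := by omega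
    simp only [Function.comp_apply]
    rw [Nat.cast_mul, e1, e2]
  rw [hsum, hcard, nsmul_eq_mul]
  ring
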